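/- Fix an integer m ≥ 1 and a real sequence a = (a_k). Define the lower-triangular matrix V = (v_{nk}) by v_{nk} = Σ_{j=k}^{n} a_j B_{jk} for 1 ≤ k ≤ n, where B is the inverse triangle of H^(m). Then a belongs to the γ-dual of h_∞(Δ^(m)) — i.e. the partial sums Σ_{k=1}^{n} a_k x_k are bounded in n for every x ∈ h_∞(Δ^(m)) — if and only if V ∈ (ℓ∞ : ℓ∞), i.e. for every bounded sequence y the sequence ((Vy)_n)_n = (Σ_{k=1}^{n} v_{nk} y_k)_n is bounded. -/
import Mathlib


open Filter Finset Topology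

/- Real sequences are modelled as functions `ℕ → ℝ`, where the Lean index `n : ℕ`
corresponds to the paper's index `n + 1` (the paper indexes sequences by `k ≥ 1`).
Thus the paper's entry `h_{nk} = ∑_{i=k}^{n} (-1)^{i-k} C(m, i-k) / (n+i-1)`
(for `1 ≤ k ≤ n`) becomes, with 0-based indices,
`hMat m n k = ∑_{i ∈ Icc k n} (-1)^{i-k} C(m, i-k) / (n+i+1)`. -/

/-- The entries of the triangle matrix `H^(m) = H Δ^(m)` (0-based indexing). -/
noncomputable def hMat (m n k : ℕ) : ℝ :=
  ∑ i ∈ Finset.Icc k n, (-1 : ℝ) ^ (i - k) * (Nat.choose m (i - k) : ℝ) / ((n + i + 1 : ℕ) : ℝ)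

/-- The `H^(m)`-transform of a sequence: `(H^(m) x)_n = ∑_{k=1}^{n} h_{nk} x_k`. -/
noncomputable def hTrans (m : ℕ) (x : ℕ → ℝ) (n : ℕ) : ℝ :=
  ∑ k ∈ Finset.range (n + 1), hMat m n k * x k

/-- `h_0(Δ^(m))`: sequences whose `H^(m)`-transform tends to `0`. -/
def hZero (m : ℕ) : Set (ℕ → ℝ) := {x | Tendsto (hTrans m x) atTop (𝓝 0)}

/-- `h_c(Δ^(m))`: sequences whose `H^(m)`-transform converges. -/
def hConv (m : ℕ) : Set (ℕ → ℝ) := {x | ∃ L : ℝ, Tendsto (hTrans m x) atTop (𝓝 L)}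

/-- `h_∞(Δ^(m))`: sequences whose `H^(m)`-transform is bounded. -/
def hBdd (m : ℕ) : Set (ℕ → ℝ) := {x | ∃ M : ℝ, ∀ n, |hTrans m x n| ≤ M}

/-- The space `c₀` of null real sequences. -/
def c0Seq : Set (ℕ → ℝ) := {y | Tendsto y atTop (𝓝 0)}

/-- The space `c` of convergent real sequences. -/
def cSeq : Set (ℕ → ℝ) := {y | ∃ L : ℝ, Tendsto y atTop (𝓝 L)}

/-- The space `ℓ∞` of bounded real sequences. -/
def linfSeq : Set (ℕ → ℝ) := {y | ∃ M : ℝ, ∀ n, |y n| ≤ M}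

/-- The sup norm `‖y‖ = sup_n |y_n|` of a sequence. -/
noncomputable def supNorm (y : ℕ → ℝ) : ℝ := ⨆ n, |y n|

/-- The norm `‖x‖ = sup_n |(H^(m) x)_n|` on the Hilbert difference sequence spaces. -/
noncomputable def hNorm (m : ℕ) (x : ℕ → ℝ) : ℝ := supNorm (hTrans m x)

/-- Swap a triangular double sum: `∑_{k≤n} ∑_{i≤k} = ∑_{i≤n} ∑_{k∈[i,n]}`. -/
lemma tri_swap (n : ℕ) (f : ℕ → ℕ → ℝ) :
    ∑ k ∈ Finset.range (n + 1), ∑ i ∈ Finset.range (k + 1), f k i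
      = ∑ i ∈ Finset.range (n + 1), ∑ k ∈ Finset.Icc i n, f k i := by
  apply Finset.sum_comm'
  intro k i
  simp only [Finset.mem_range, Finset.mem_Icc, Nat.lt_succ_iff]
  omega

/-- Swap `∑_{k≤n} ∑_{j∈[k,n]} = ∑_{j≤n} ∑_{k≤j}`. -/
lemma tri_swap' (n : ℕ) (f : ℕ → ℕ → ℝ) :
    ∑ k ∈ Finset.range (n + 1), ∑ j ∈ Finset.Icc k n, f k j
      = ∑ j ∈ Finset.range (n + 1), ∑ k ∈ Finset.range (j + 1), f k j := by
  apply Finset.sum_comm'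
  intro k j
  simp only [Finset.mem_range, Finset.mem_Icc, Nat.lt_succ_iff]
  omega

lemma key_identity (m : ℕ) (a : ℕ → ℝ) (B : ℕ → ℕ → ℝ)
    (hBleft : ∀ n k : ℕ, (∑ j ∈ Finset.Icc k n, B n j * hMat m j k) = if n = k then 1 else 0)
    (x : ℕ → ℝ) (n : ℕ) :
    ∑ k ∈ Finset.range (n + 1),
        (∑ j ∈ Finset.Icc k n, a j * B j k) * hTrans m x k
      = ∑ k ∈ Finset.range (n + 1), a k * x k := by
  have step1 : ∑ k ∈ Finset.range (n + 1),
      (∑ j ∈ Finset.Icc k n, a j * B j k) * hTrans m x k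
      = ∑ k ∈ Finset.range (n + 1), ∑ j ∈ Finset.Icc k n,
          a j * B j k * hTrans m x k := by
    simp [Finset.sum_mul]
  rw [step1, tri_swap' n (fun k j => a j * B j k * hTrans m x k)]
  have step2 : ∀ j ∈ Finset.range (n + 1),
      ∑ k ∈ Finset.range (j + 1), a j * B j k * hTrans m x k
        = a j * x j := by
    intro j _
    have expand : ∑ k ∈ Finset.range (j + 1), a j * B j k * hTrans m x k
        = ∑ k ∈ Finset.range (j + 1), ∑ i ∈ Finset.range (k + 1),
            (a j * x i) * (B j k * hMat m k i) := by
      unfold hTrans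
      rw [Finset.sum_congr rfl]
      intro k _
      rw [Finset.mul_sum]
      apply Finset.sum_congr rfl
      intro i _
      ring
    rw [expand, tri_swap j (fun k i => (a j * x i) * (B j k * hMat m k i))]
    have inner : ∀ i ∈ Finset.range (j + 1),
        ∑ k ∈ Finset.Icc i j, (a j * x i) * (B j k * hMat m k i)
          = (a j * x i) * (if j = i then 1 else 0) := by
      intro i _
      rw [← Finset.mul_sum, hBleft j i]
    rw [Finset.sum_congr rfl inner]
    simp only [mul_ite, mul_one, mul_zero]
    rw [Finset.sum_ite_eq (Finset.range (j + 1)) j (fun i => a j * x i)]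
    simp
  rw [Finset.sum_congr rfl step2]

lemma hTrans_B (m : ℕ) (B : ℕ → ℕ → ℝ)
    (hBright : ∀ n k : ℕ, (∑ j ∈ Finset.Icc k n, hMat m n j * B j k) = if n = k then 1 else 0)
    (y : ℕ → ℝ) (n : ℕ) :
    hTrans m (fun k => ∑ j ∈ Finset.range (k + 1), B k j * y j) n = y n := by
  unfold hTrans
  have expand : ∑ k ∈ Finset.range (n + 1),
      hMat m n k * ∑ j ∈ Finset.range (k + 1), B k j * y j
      = ∑ k ∈ Finset.range (n + 1), ∑ j ∈ Finset.range (k + 1),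
          y j * (hMat m n k * B k j) := by
    apply Finset.sum_congr rfl
    intro k _
    rw [Finset.mul_sum]
    apply Finset.sum_congr rfl
    intro j _
    ring
  rw [expand, tri_swap n (fun k j => y j * (hMat m n k * B k j))]
  have inner : ∀ j ∈ Finset.range (n + 1),
      ∑ k ∈ Finset.Icc j n, y j * (hMat m n k * B k j)
        = y j * (if n = j then 1 else 0) := by
    intro j _
    rw [← Finset.mul_sum, hBright n j]
  rw [Finset.sum_congr rfl inner]
  simp only [mul_ite, mul_one, mul_zero]
  rw [Finset.sum_ite_eq (Finset.range (n + 1)) n (fun j => y j)]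
  simp


/-- `a` is in the γ-dual of `hBdd m` iff the matrix `V`, `v_{nk} = ∑_{j=k}^n a_j B_{jk}`,
maps `linfSeq` into the bounded sequences. -/
theorem hilbert_diff_gammaDual_hinf (m : ℕ) (hm : 1 ≤ m) (a : ℕ → ℝ)
    (B : ℕ → ℕ → ℝ)
    (hBtri : ∀ n k : ℕ, n < k → B n k = 0)
    (hBright : ∀ n k : ℕ, (∑ j ∈ Finset.Icc k n, hMat m n j * B j k) = if n = k then 1 else 0)
    (hBleft : ∀ n k : ℕ, (∑ j ∈ Finset.Icc k n, B n j * hMat m j k) = if n = k then 1 else 0) :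
    (∀ x ∈ hBdd m, ∃ M : ℝ, ∀ n : ℕ,
        |∑ k ∈ Finset.range (n + 1), a k * x k| ≤ M) ↔
    (∀ y ∈ linfSeq, ∃ M : ℝ, ∀ n : ℕ,
        |∑ k ∈ Finset.range (n + 1),
          (∑ j ∈ Finset.Icc k n, a j * B j k) * y k| ≤ M) := by
  constructor
  · intro h y hy
    obtain ⟨My, hMy⟩ := hy
    set x : ℕ → ℝ := fun k => ∑ j ∈ Finset.range (k + 1), B k j * y j with hxdef
    have hxy : ∀ n, hTrans m x n = y n := fun n => hTrans_B m B hBright y n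
    obtain ⟨M, hM⟩ := h x ⟨My, fun n => by rw [hxy]; exact hMy n⟩
    refine ⟨M, fun n => ?_⟩
    have : ∑ k ∈ Finset.range (n + 1), (∑ j ∈ Finset.Icc k n, a j * B j k) * y k
        = ∑ k ∈ Finset.range (n + 1), a k * x k := by
      rw [← key_identity m a B hBleft x n]
      exact Finset.sum_congr rfl fun k _ => by rw [hxy]
    rw [this]; exact hM n
  · intro h x hx
    obtain ⟨M, hM⟩ := h (hTrans m x) hx
    refine ⟨M, fun n => ?_⟩
    rw [← key_identity m a B hBleft x n]
    exact hM n
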